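/- Let H be a d-uniform simple hypergraph with at least one edge. Then max{ j − i : there is a self disjoint set in H consisting of i edges whose union has j vertices } = (d − 1)·a_H, where a_H is the maximum size of an induced matching in H (that is, d'_{1,H} = (d − 1)·a_H). -/
import Mathlib


variable {V : Type*} [DecidableEq V] [Fintype V]

/-- The union of a family of edges. -/
def unionEdges (M : Finset (Finset V)) : Finset V := M.biUnion id

/-- `E` is the edge set of a simple hypergraph: every edge has at least two
vertices and no edge is contained in another distinct edge. -/
def IsSimpleHypergraph (E : Finset (Finset V)) : Prop :=
  (∀ S ∈ E, 2 ≤ S.card) ∧ ∀ S ∈ E, ∀ T ∈ E, S ⊆ T → S = T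

/-- A family `M` of edges of `E` is a semi-induced matching if no edge of `E`
outside `M` is contained in the union of the members of `M`. -/
def IsSemiInducedMatching (E M : Finset (Finset V)) : Prop :=
  M ⊆ E ∧ ∀ S ∈ E, S ∉ M → ¬ S ⊆ unionEdges M

/-- An induced matching is a semi-induced matching whose edges are pairwise disjoint. -/
def IsInducedMatching (E M : Finset (Finset V)) : Prop :=
  IsSemiInducedMatching E M ∧ ∀ S ∈ M, ∀ T ∈ M, S ≠ T → Disjoint S T

/-- A self semi-induced matching is a semi-induced matching in which no member
is contained in the union of the other members. -/
def IsSelfSemiInducedMatching (E M : Finset (Finset V)) : Prop :=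
  IsSemiInducedMatching E M ∧ ∀ S ∈ M, ¬ S ⊆ unionEdges (M.erase S)

/-- A self-contained semi-induced matching. -/
def IsSelfContainedSemiInducedMatching (E M : Finset (Finset V)) : Prop :=
  M ⊆ E ∧
  (∀ S ∈ E, S ∉ M → ¬ S ⊆ unionEdges M ∨ ∃ T ∈ M, T ⊆ S ∪ unionEdges (M.erase T)) ∧
  ∀ S ∈ M, ¬ S ⊆ unionEdges (M.erase S)

/-- A self disjoint set of edges. -/
def IsSelfDisjointSet (E M : Finset (Finset V)) : Prop :=
  M ⊆ E ∧ (∀ S ∈ M, ¬ S ⊆ unionEdges (M.erase S)) ∧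
  ∃ M₀ ⊆ M, IsInducedMatching E M₀ ∧
    ∀ S ∈ M, S ∉ M₀ → ∃ T ∈ M₀, (S \ T).card = 1

/-- A self semi-disjoint set of edges. -/
def IsSelfSemiDisjointSet (E M : Finset (Finset V)) : Prop :=
  M ⊆ E ∧ (∀ S ∈ M, ¬ S ⊆ unionEdges (M.erase S)) ∧
  ∃ M₀ ⊆ M, IsSemiInducedMatching E M₀ ∧
    ∀ S ∈ M, S ∉ M₀ → ∃ T ∈ M₀, (S \ T).card = 1

lemma mem_unionEdges {M : Finset (Finset V)} {v : V} :
    v ∈ unionEdges M ↔ ∃ S ∈ M, v ∈ S := by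
  simp [unionEdges]

lemma unionEdges_card_of_matching {E M : Finset (Finset V)} {d : ℕ}
    (hM : IsInducedMatching E M) (hUnif : ∀ S ∈ E, S.card = d) :
    (unionEdges M).card = d * M.card := by
  have h := Finset.card_biUnion (t := (id : Finset V → Finset V)) hM.2
  rw [unionEdges, h]
  rw [show ∑ u ∈ M, (id u).card = ∑ u ∈ M, d from
    Finset.sum_congr rfl (fun S hS => hUnif S (hM.1.1 hS))]
  simp [Finset.sum_const, mul_comm]

lemma matching_self {E M : Finset (Finset V)} (hH : IsSimpleHypergraph E)
    (hM : IsInducedMatching E M) :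
    ∀ S ∈ M, ¬ S ⊆ unionEdges (M.erase S) := by
  intro S hS hsub
  have hSE := hM.1.1 hS
  have hScard := hH.1 S hSE
  have hSne : S.Nonempty := Finset.card_pos.mp (by omega)
  obtain ⟨v, hv⟩ := hSne
  obtain ⟨T, hT, hvT⟩ := mem_unionEdges.mp (hsub hv)
  have hTne : T ≠ S := Finset.ne_of_mem_erase hT
  have hdisj := hM.2 S hS T (Finset.mem_of_mem_erase hT) (Ne.symm hTne)
  exact Finset.disjoint_left.mp hdisj hv hvT

/-- for a `d`-uniform simple hypergraph with at least one edge,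
`d'_{1,H} = (d - 1) * a_H`, where `d'_{1,H}` is the maximum of `j - i` over
self disjoint sets of type `(i, j)` and `a_H` is the maximum size of an induced
matching. -/
theorem d1'_eq_d_sub_one_mul_inducedMatchingNumber
    (E : Finset (Finset V)) (d : ℕ)
    (hH : IsSimpleHypergraph E) (hUnif : ∀ S ∈ E, S.card = d)
    (hne : E.Nonempty) :
    sSup {n : ℕ | ∃ M, IsSelfDisjointSet E M ∧ (unionEdges M).card - M.card = n} =
      (d - 1) * sSup {n : ℕ | ∃ M, IsInducedMatching E M ∧ M.card = n} := by
  obtain ⟨S₀, hS₀⟩ := hne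
  have hd : 2 ≤ d := by have := hH.1 S₀ hS₀; rw [hUnif S₀ hS₀] at this; exact this
  set B : Set ℕ := {n : ℕ | ∃ M, IsInducedMatching E M ∧ M.card = n} with hBdef
  set A : Set ℕ := {n : ℕ | ∃ M, IsSelfDisjointSet E M ∧ (unionEdges M).card - M.card = n}
    with hAdef
  have hBne : B.Nonempty := by
    refine ⟨0, ∅, ⟨⟨Finset.empty_subset E, ?_⟩, by simp⟩, rfl⟩
    intro S hS _ hsub
    have : S = ∅ := Finset.subset_empty.mp (by simpa [unionEdges] using hsub)
    have h2 := hH.1 S hS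
    simp [this] at h2
  have hBbdd : BddAbove B := by
    refine ⟨E.card, ?_⟩
    rintro n ⟨M, hM, rfl⟩
    exact Finset.card_le_card hM.1.1
  have hAbdd : BddAbove A := by
    refine ⟨Fintype.card V, ?_⟩
    rintro n ⟨M, _, rfl⟩
    exact (Nat.sub_le _ _).trans ((Finset.card_le_card (Finset.subset_univ _)).trans_eq
      Finset.card_univ)
  set a := sSup B with ha
  obtain ⟨M, hM, hMa⟩ : a ∈ B := Nat.sSup_mem hBne hBbdd
  have hMsd : IsSelfDisjointSet E M :=
    ⟨hM.1.1, matching_self hH hM, M, Finset.Subset.refl M, hM,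
      fun S hS hS' => absurd hS hS'⟩
  have hMcalc : (unionEdges M).card - M.card = (d - 1) * a := by
    rw [unionEdges_card_of_matching hM hUnif, hMa, Nat.sub_one_mul]
  have hmemA : (d - 1) * a ∈ A := ⟨M, hMsd, hMcalc⟩
  refine le_antisymm (csSup_le ⟨_, hmemA⟩ ?_) (le_csSup hAbdd hmemA)
  rintro n ⟨N, ⟨hNE, _, M₀, hM₀N, hM₀ind, hone⟩, rfl⟩
  have hm₀a : M₀.card ≤ a := le_csSup hBbdd ⟨M₀, hM₀ind, rfl⟩
  have hm₀m : M₀.card ≤ N.card := Finset.card_le_card hM₀N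
  have hcard₀ : (unionEdges M₀).card = d * M₀.card :=
    unionEdges_card_of_matching hM₀ind hUnif
  -- every vertex of unionEdges N is in unionEdges M₀ or one of the ≤1-element extras
  have hsub : unionEdges N ⊆
      unionEdges M₀ ∪ (N \ M₀).biUnion (fun S => S \ unionEdges M₀) := by
    intro v hv
    obtain ⟨S, hS, hvS⟩ := mem_unionEdges.mp hv
    rw [Finset.mem_union]
    by_cases h : v ∈ unionEdges M₀
    · exact Or.inl h
    · refine Or.inr (Finset.mem_biUnion.mpr ⟨S, ?_, Finset.mem_sdiff.mpr ⟨hvS, h⟩⟩)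
      refine Finset.mem_sdiff.mpr ⟨hS, fun hS₀ => h (mem_unionEdges.mpr ⟨S, hS₀, hvS⟩)⟩
  have hextra : ∀ S ∈ N \ M₀, (S \ unionEdges M₀).card ≤ 1 := by
    intro S hS
    rw [Finset.mem_sdiff] at hS
    obtain ⟨T, hT, hST⟩ := hone S hS.1 hS.2
    have hTsub : T ⊆ unionEdges M₀ := fun v hv => mem_unionEdges.mpr ⟨T, hT, hv⟩
    calc (S \ unionEdges M₀).card ≤ (S \ T).card :=
          Finset.card_le_card (Finset.sdiff_subset_sdiff (Finset.Subset.refl S) hTsub)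
      _ = 1 := hST
  have hu : (unionEdges N).card ≤ d * M₀.card + (N.card - M₀.card) := by
    calc (unionEdges N).card
        ≤ (unionEdges M₀ ∪ (N \ M₀).biUnion (fun S => S \ unionEdges M₀)).card :=
          Finset.card_le_card hsub
      _ ≤ (unionEdges M₀).card + ((N \ M₀).biUnion (fun S => S \ unionEdges M₀)).card :=
          Finset.card_union_le _ _
      _ ≤ d * M₀.card + ∑ S ∈ N \ M₀, (S \ unionEdges M₀).card := by
          rw [hcard₀]
          exact Nat.add_le_add_left (Finset.card_biUnion_le) _
      _ ≤ d * M₀.card + ∑ _S ∈ N \ M₀, 1 :=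
          Nat.add_le_add_left (Finset.sum_le_sum hextra) _
      _ = d * M₀.card + (N.card - M₀.card) := by
          rw [Finset.sum_const, smul_eq_mul, mul_one, Finset.card_sdiff_of_subset hM₀N]
  have key : (unionEdges N).card - N.card ≤ (d - 1) * M₀.card := by
    rw [Nat.sub_le_iff_le_add]
    calc (unionEdges N).card ≤ d * M₀.card + (N.card - M₀.card) := hu
      _ = ((d - 1) + 1) * M₀.card + (N.card - M₀.card) := by
          rw [Nat.sub_add_cancel (by omega : 1 ≤ d)]
      _ = (d - 1) * M₀.card + (M₀.card + (N.card - M₀.card)) := by ring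
      _ = (d - 1) * M₀.card + N.card := by rw [Nat.add_sub_cancel' hm₀m]
  exact key.trans (Nat.mul_le_mul_left _ hm₀a)
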